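/- Let F(t) = At² + Bt + C be an integer quadratic polynomial with A > 0 whose discriminant B² − 4AC equals −η² for some integer η. Then F(t) is a sum of two squares for every integer t with F(t) ≥ 0. -/

import Mathlib

/-- If `a` and `a*f` are (nonzero and) sums of two squares in ℕ, then so is `f`. -/
lemma nat_sum_two_sq_of_mul {a f : ℕ} (ha : a ≠ 0)
    (haq : ∃ x y : ℕ, a = x ^ 2 + y ^ 2) (hafq : ∃ x y : ℕ, a * f = x ^ 2 + y ^ 2) :
    ∃ x y : ℕ, f = x ^ 2 + y ^ 2 := by
  rcases eq_or_ne f 0 with rfl | hf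
  · exact ⟨0, 0, rfl⟩
  rw [Nat.eq_sq_add_sq_iff] at haq hafq ⊢
  intro q hq h3
  haveI : Fact q.Prime := ⟨Nat.prime_of_mem_primeFactors hq⟩
  have h := hafq q (by rw [Nat.primeFactors_mul ha hf]; exact Finset.mem_union_right _ hq) h3
  rw [padicValNat.mul ha hf] at h
  by_cases hqa : q ∈ a.primeFactors
  · exact (Nat.even_add.mp h).mp (haq q hqa h3)
  · have hnd : ¬ q ∣ a := fun hd => hqa (Nat.mem_primeFactors.mpr ⟨this.out, hd, ha⟩)
    rw [padicValNat.eq_zero_of_not_dvd hnd, zero_add] at h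
    exact h

theorem quadratic_neg_square_disc_sum_two_squares (A B C : ℤ) (hA : 0 < A)
    (hdisc : ∃ η : ℤ, B ^ 2 - 4 * A * C = -η ^ 2)
    (hAsq : ∃ p q : ℤ, A = p ^ 2 + q ^ 2) :
    ∀ t : ℤ, 0 ≤ A * t ^ 2 + B * t + C →
      ∃ x y : ℤ, A * t ^ 2 + B * t + C = x ^ 2 + y ^ 2 := by
  intro t ht
  obtain ⟨η, hη⟩ := hdisc
  obtain ⟨p, q, hpq⟩ := hAsq
  set F : ℤ := A * t ^ 2 + B * t + C with hF
  have key : (4 * A) * F = (2 * A * t + B) ^ 2 + η ^ 2 := by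
    have : B ^ 2 - 4 * A * C = -η ^ 2 := hη
    ring_nf
    linarith [this]
  -- move to ℕ
  set a : ℕ := A.toNat with ha
  set f : ℕ := F.toNat with hf
  have hAa : (a : ℤ) = A := Int.toNat_of_nonneg hA.le
  have hFf : (f : ℤ) = F := Int.toNat_of_nonneg ht
  have ha0 : a ≠ 0 := by simp [ha]; omega
  have haq : ∃ x y : ℕ, a = x ^ 2 + y ^ 2 := by
    refine ⟨p.natAbs, q.natAbs, ?_⟩
    have : (a : ℤ) = (p.natAbs : ℤ) ^ 2 + (q.natAbs : ℤ) ^ 2 := by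
      rw [hAa, hpq]; simp [sq_abs]
    exact_mod_cast this
  have h4 : ∃ x y : ℕ, (4 * a) * f = x ^ 2 + y ^ 2 := by
    refine ⟨(2 * A * t + B).natAbs, η.natAbs, ?_⟩
    have : ((4 * a : ℕ) * f : ℤ) = ((2 * A * t + B).natAbs : ℤ) ^ 2 + (η.natAbs : ℤ) ^ 2 := by
      push_cast [hAa, hFf]
      simp only [sq_abs]
      linarith [key]
    exact_mod_cast this
  have hfq : ∃ x y : ℕ, f = x ^ 2 + y ^ 2 := by
    apply nat_sum_two_sq_of_mul (a := 4 * a) (by omega) _ h4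
    obtain ⟨x, y, hxy⟩ := haq
    exact ⟨2 * x, 2 * y, by rw [hxy]; ring⟩
  obtain ⟨x, y, hxy⟩ := hfq
  exact ⟨x, y, by rw [← hFf, hxy]; push_cast; ring⟩
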